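/- There exist Θ : Fin 7 → M₃(ℝ) with each Θ(x) among the 16 factorized states {ω_i ω_jᵀ : i, j ∈ {0,1,2,3}}, and F : Fin 7 → M₃(ℝ) with each F(y) a nonnegative linear combination of the 24 extremal normalized effects {E₀, …, E₂₃} and \sum_y F(y) = Ē, such that the 7×7 matrix p with p_{x,y} = Tr(F(y)ᵀ Θ(x)) does not belong to C(7,7,4). Hence the bipartite HS Model, built from two systems each of signaling dimension 2, has signaling dimension strictly greater than 4: it violates the no-hypersignaling principle. -/

import Mathlib

open Matrix

/-- The four extremal states of the squit. -/
noncomputable def ws : Fin 4 → (Fin 3 → ℝ) :=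
  ![![1, 0, 1], ![0, 1, 1], ![-1, 0, 1], ![0, -1, 1]]

/-- The four extremal normalized effects of the squit. -/
noncomputable def es : Fin 4 → (Fin 3 → ℝ) :=
  ![![1, 1, 1], ![-1, 1, 1], ![-1, -1, 1], ![1, -1, 1]]

/-- The eight entangled extremal bipartite states `Ω₁₆, …, Ω₂₃`. -/
noncomputable def OmegaEnt : Fin 8 → Matrix (Fin 3) (Fin 3) ℝ :=
  ![(1/2 : ℝ) • Matrix.of ![![-1, 1, 0], ![1, 1, 0], ![0, 0, 2]],
    (1/2 : ℝ) • Matrix.of ![![-1, -1, 0], ![-1, 1, 0], ![0, 0, 2]],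
    (1/2 : ℝ) • Matrix.of ![![1, -1, 0], ![-1, -1, 0], ![0, 0, 2]],
    (1/2 : ℝ) • Matrix.of ![![1, 1, 0], ![1, -1, 0], ![0, 0, 2]],
    (1/2 : ℝ) • Matrix.of ![![-1, -1, 0], ![1, -1, 0], ![0, 0, 2]],
    (1/2 : ℝ) • Matrix.of ![![1, -1, 0], ![1, 1, 0], ![0, 0, 2]],
    (1/2 : ℝ) • Matrix.of ![![1, 1, 0], ![-1, 1, 0], ![0, 0, 2]],
    (1/2 : ℝ) • Matrix.of ![![-1, 1, 0], ![-1, -1, 0], ![0, 0, 2]]]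

/-- The eight entangled extremal bipartite normalized effects `E₁₆, …, E₂₃`. -/
noncomputable def EEnt : Fin 8 → Matrix (Fin 3) (Fin 3) ℝ :=
  ![Matrix.of ![![-1, 1, 0], ![1, 1, 0], ![0, 0, 1]],
    Matrix.of ![![-1, -1, 0], ![-1, 1, 0], ![0, 0, 1]],
    Matrix.of ![![1, -1, 0], ![-1, -1, 0], ![0, 0, 1]],
    Matrix.of ![![1, 1, 0], ![1, -1, 0], ![0, 0, 1]],
    Matrix.of ![![-1, 1, 0], ![-1, -1, 0], ![0, 0, 1]],
    Matrix.of ![![1, 1, 0], ![-1, 1, 0], ![0, 0, 1]],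
    Matrix.of ![![1, -1, 0], ![1, 1, 0], ![0, 0, 1]],
    Matrix.of ![![-1, -1, 0], ![1, -1, 0], ![0, 0, 1]]]

/-- The 24 extremal bipartite states `Ω₀, …, Ω₂₃`: the 16 factorized states
`Ω_{4i+j} = ω_i ω_jᵀ` followed by the 8 entangled ones. -/
noncomputable def Omegas : Fin 24 → Matrix (Fin 3) (Fin 3) ℝ := fun x =>
  if h : (x : ℕ) < 16 then
    Matrix.vecMulVec (ws ⟨(x : ℕ) / 4, by omega⟩) (ws ⟨(x : ℕ) % 4, by omega⟩)
  else OmegaEnt ⟨(x : ℕ) - 16, by have := x.isLt; omega⟩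

/-- The 24 extremal bipartite normalized effects `E₀, …, E₂₃`: the 16 factorized
effects `E_{4i+j} = e_i e_jᵀ` followed by the 8 entangled ones. -/
noncomputable def Effs : Fin 24 → Matrix (Fin 3) (Fin 3) ℝ := fun x =>
  if h : (x : ℕ) < 16 then
    Matrix.vecMulVec (es ⟨(x : ℕ) / 4, by omega⟩) (es ⟨(x : ℕ) % 4, by omega⟩)
  else EEnt ⟨(x : ℕ) - 16, by have := x.isLt; omega⟩

/-- The bipartite unit effect `Ē = ē ēᵀ` with `ē = (0,0,1)`. -/
noncomputable def Ebar : Matrix (Fin 3) (Fin 3) ℝ :=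
  Matrix.vecMulVec ![0, 0, 1] ![0, 0, 1]

/-- `V m n d` : the set of `m × n` real matrices with all entries in `{0,1}`,
each row summing to `1`, and with at most `d` nonzero columns. -/
def V (m n d : ℕ) : Set (Matrix (Fin m) (Fin n) ℝ) :=
  {p | (∀ x y, p x y = 0 ∨ p x y = 1) ∧ (∀ x, ∑ y, p x y = 1) ∧
       ({y : Fin n | ∃ x, p x y ≠ 0}).ncard ≤ d}

/-- `C m n d` : the convex hull of `V m n d`. -/
def C (m n d : ℕ) : Set (Matrix (Fin m) (Fin n) ℝ) := convexHull ℝ (V m n d)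

set_option maxRecDepth 100000

noncomputable def cmeasN : Fin 7 → Fin 24 → ℕ := fun y k =>
  if (y = 0 ∧ k = 2) ∨ (y = 1 ∧ k = 4) ∨ (y = 2 ∧ k = 7) ∨ (y = 3 ∧ k = 9)
     ∨ (y = 4 ∧ k = 12) ∨ (y = 5 ∧ k = 14) then 1 else if y = 6 ∧ k = 21 then 2 else 0

noncomputable def cmeas : Fin 7 → Fin 24 → ℝ := fun y k => (cmeasN y k : ℝ) / 8

noncomputable def Fm : Fin 7 → Matrix (Fin 3) (Fin 3) ℝ := fun y => ∑ k, cmeas y k • Effs k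

lemma Effs2 : Effs 2 = vecMulVec (es 0) (es 2) := rfl
lemma Effs4 : Effs 4 = vecMulVec (es 1) (es 0) := rfl
lemma Effs7 : Effs 7 = vecMulVec (es 1) (es 3) := rfl
lemma Effs9 : Effs 9 = vecMulVec (es 2) (es 1) := rfl
lemma Effs12 : Effs 12 = vecMulVec (es 3) (es 0) := rfl
lemma Effs14 : Effs 14 = vecMulVec (es 3) (es 2) := rfl
lemma Effs21 : Effs 21 = EEnt 5 := by
  have h1 : Effs 21 = EEnt ⟨(21:ℕ)-16, by omega⟩ := rfl
  have h2 : (⟨(21:ℕ)-16, by omega⟩ : Fin 8) = 5 := rfl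
  rw [h1, h2]

lemma vec8at0 {α : Type*} (a0 a1 a2 a3 a4 a5 a6 a7 : α) : ![a0,a1,a2,a3,a4,a5,a6,a7] (0:Fin 8) = a0 := rfl
lemma vec8at1 {α : Type*} (a0 a1 a2 a3 a4 a5 a6 a7 : α) : ![a0,a1,a2,a3,a4,a5,a6,a7] (1:Fin 8) = a1 := rfl
lemma vec8at2 {α : Type*} (a0 a1 a2 a3 a4 a5 a6 a7 : α) : ![a0,a1,a2,a3,a4,a5,a6,a7] (2:Fin 8) = a2 := rfl
lemma vec8at3 {α : Type*} (a0 a1 a2 a3 a4 a5 a6 a7 : α) : ![a0,a1,a2,a3,a4,a5,a6,a7] (3:Fin 8) = a3 := rfl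
lemma vec8at4 {α : Type*} (a0 a1 a2 a3 a4 a5 a6 a7 : α) : ![a0,a1,a2,a3,a4,a5,a6,a7] (4:Fin 8) = a4 := rfl
lemma vec8at5 {α : Type*} (a0 a1 a2 a3 a4 a5 a6 a7 : α) : ![a0,a1,a2,a3,a4,a5,a6,a7] (5:Fin 8) = a5 := rfl
lemma vec8at6 {α : Type*} (a0 a1 a2 a3 a4 a5 a6 a7 : α) : ![a0,a1,a2,a3,a4,a5,a6,a7] (6:Fin 8) = a6 := rfl
lemma vec8at7 {α : Type*} (a0 a1 a2 a3 a4 a5 a6 a7 : α) : ![a0,a1,a2,a3,a4,a5,a6,a7] (7:Fin 8) = a7 := rfl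
lemma fin7mk0 (h : 0 < 7) : (⟨0, h⟩ : Fin 7) = 0 := rfl
lemma fin7mk1 (h : 1 < 7) : (⟨1, h⟩ : Fin 7) = 1 := rfl
lemma fin7mk2 (h : 2 < 7) : (⟨2, h⟩ : Fin 7) = 2 := rfl
lemma fin7mk3 (h : 3 < 7) : (⟨3, h⟩ : Fin 7) = 3 := rfl
lemma fin7mk4 (h : 4 < 7) : (⟨4, h⟩ : Fin 7) = 4 := rfl
lemma fin7mk5 (h : 5 < 7) : (⟨5, h⟩ : Fin 7) = 5 := rfl
lemma fin7mk6 (h : 6 < 7) : (⟨6, h⟩ : Fin 7) = 6 := rfl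
lemma fin3mk0 (h : 0 < 3) : (⟨0, h⟩ : Fin 3) = 0 := rfl
lemma fin3mk1 (h : 1 < 3) : (⟨1, h⟩ : Fin 3) = 1 := rfl
lemma fin3mk2 (h : 2 < 3) : (⟨2, h⟩ : Fin 3) = 2 := rfl
lemma vec3at0 {α : Type*} (a0 a1 a2 : α) : ![a0,a1,a2] (0:Fin 3) = a0 := rfl
lemma vec3at1 {α : Type*} (a0 a1 a2 : α) : ![a0,a1,a2] (1:Fin 3) = a1 := rfl
lemma vec3at2 {α : Type*} (a0 a1 a2 : α) : ![a0,a1,a2] (2:Fin 3) = a2 := rfl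
lemma vec4at0 {α : Type*} (a0 a1 a2 a3 : α) : ![a0,a1,a2,a3] (0:Fin 4) = a0 := rfl
lemma vec4at1 {α : Type*} (a0 a1 a2 a3 : α) : ![a0,a1,a2,a3] (1:Fin 4) = a1 := rfl
lemma vec4at2 {α : Type*} (a0 a1 a2 a3 : α) : ![a0,a1,a2,a3] (2:Fin 4) = a2 := rfl
lemma vec4at3 {α : Type*} (a0 a1 a2 a3 : α) : ![a0,a1,a2,a3] (3:Fin 4) = a3 := rfl
lemma vec7at0 {α : Type*} (a0 a1 a2 a3 a4 a5 a6 : α) : ![a0,a1,a2,a3,a4,a5,a6] (0:Fin 7) = a0 := rfl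
lemma vec7at1 {α : Type*} (a0 a1 a2 a3 a4 a5 a6 : α) : ![a0,a1,a2,a3,a4,a5,a6] (1:Fin 7) = a1 := rfl
lemma vec7at2 {α : Type*} (a0 a1 a2 a3 a4 a5 a6 : α) : ![a0,a1,a2,a3,a4,a5,a6] (2:Fin 7) = a2 := rfl
lemma vec7at3 {α : Type*} (a0 a1 a2 a3 a4 a5 a6 : α) : ![a0,a1,a2,a3,a4,a5,a6] (3:Fin 7) = a3 := rfl
lemma vec7at4 {α : Type*} (a0 a1 a2 a3 a4 a5 a6 : α) : ![a0,a1,a2,a3,a4,a5,a6] (4:Fin 7) = a4 := rfl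
lemma vec7at5 {α : Type*} (a0 a1 a2 a3 a4 a5 a6 : α) : ![a0,a1,a2,a3,a4,a5,a6] (5:Fin 7) = a5 := rfl
lemma vec7at6 {α : Type*} (a0 a1 a2 a3 a4 a5 a6 : α) : ![a0,a1,a2,a3,a4,a5,a6] (6:Fin 7) = a6 := rfl

lemma cmeas_zero : ∀ y k, cmeasN y k = 0 → cmeas y k • Effs k = 0 := by
  intro y k h; simp [cmeas, h]

lemma Fm_eq (y : Fin 7) (k0 : Fin 24) (h : ∀ k, k ≠ k0 → cmeasN y k = 0) :
    Fm y = cmeas y k0 • Effs k0 := by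
  rw [Fm, Finset.sum_eq_single k0]
  · intro b _ hb; exact cmeas_zero y b (h b hb)
  · intro h'; exact absurd (Finset.mem_univ k0) h'

lemma Fm0 : Fm 0 = (1/8 : ℝ) • vecMulVec (es 0) (es 2) := by
  rw [Fm_eq 0 2 (by decide), Effs2]
  have : cmeasN 0 2 = 1 := by decide
  rw [cmeas, this]; norm_num

lemma Fm1 : Fm 1 = (1/8 : ℝ) • vecMulVec (es 1) (es 0) := by
  rw [Fm_eq 1 4 (by decide), Effs4]
  have : cmeasN 1 4 = 1 := by decide
  rw [cmeas, this]; norm_num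
lemma Fm2 : Fm 2 = (1/8 : ℝ) • vecMulVec (es 1) (es 3) := by
  rw [Fm_eq 2 7 (by decide), Effs7]
  have : cmeasN 2 7 = 1 := by decide
  rw [cmeas, this]; norm_num
lemma Fm3 : Fm 3 = (1/8 : ℝ) • vecMulVec (es 2) (es 1) := by
  rw [Fm_eq 3 9 (by decide), Effs9]
  have : cmeasN 3 9 = 1 := by decide
  rw [cmeas, this]; norm_num
lemma Fm4 : Fm 4 = (1/8 : ℝ) • vecMulVec (es 3) (es 0) := by
  rw [Fm_eq 4 12 (by decide), Effs12]
  have : cmeasN 4 12 = 1 := by decide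
  rw [cmeas, this]; norm_num
lemma Fm5 : Fm 5 = (1/8 : ℝ) • vecMulVec (es 3) (es 2) := by
  rw [Fm_eq 5 14 (by decide), Effs14]
  have : cmeasN 5 14 = 1 := by decide
  rw [cmeas, this]; norm_num
lemma Fm6 : Fm 6 = (1/4 : ℝ) • EEnt 5 := by
  rw [Fm_eq 6 21 (by decide), Effs21]
  have : cmeasN 6 21 = 2 := by decide
  rw [cmeas, this]; norm_num

lemma trace_vmv (e f w v : Fin 3 → ℝ) :
    Matrix.trace ((vecMulVec e f)ᵀ * vecMulVec w v) = (e ⬝ᵥ w) * (f ⬝ᵥ v) := by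
  simp [Matrix.trace, Matrix.diag, Matrix.mul_apply, Matrix.vecMulVec_apply,
    Matrix.transpose_apply, Fin.sum_univ_succ, dotProduct]
  ring

lemma trace_smul_l (c : ℝ) (M N : Matrix (Fin 3) (Fin 3) ℝ) :
    Matrix.trace ((c • M)ᵀ * N) = c * Matrix.trace (Mᵀ * N) := by
  rw [Matrix.transpose_smul, Matrix.smul_mul, Matrix.trace_smul, smul_eq_mul]

noncomputable def Th : Fin 7 → Matrix (Fin 3) (Fin 3) ℝ :=
  ![vecMulVec (ws 2) (ws 1), vecMulVec (ws 3) (ws 2), vecMulVec (ws 1) (ws 2),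
    vecMulVec (ws 2) (ws 3), vecMulVec (ws 3) (ws 1), vecMulVec (ws 1) (ws 3),
    vecMulVec (ws 0) (ws 2)]

noncomputable def pE : Matrix (Fin 7) (Fin 7) ℝ :=
  Matrix.of ![![0,1/2,0,1/2,0,0,0], ![0,0,0,1/2,0,1/2,0], ![1/2,0,0,0,0,0,1/2],
    ![0,0,1/2,0,0,0,1/2], ![0,0,0,1/2,1/2,0,0], ![1/2,0,1/2,0,0,0,0], ![1/2,0,0,0,0,1/2,0]]

lemma trace_EEnt5 (w v : Fin 3 → ℝ) :
    Matrix.trace ((EEnt 5)ᵀ * vecMulVec w v)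
      = w 0 * (v 0 + v 1) + w 1 * (v 1 - v 0) + w 2 * v 2 := by
  simp [Matrix.trace, Matrix.diag, Matrix.mul_apply, Matrix.vecMulVec_apply,
    Matrix.transpose_apply, Fin.sum_univ_succ, EEnt, Matrix.of_apply, vec8at5,
    vec3at0, vec3at1, vec3at2]
  ring

lemma hp : (Matrix.of fun x y => Matrix.trace ((Fm y)ᵀ * Th x)) = pE := by
  ext x y
  fin_cases x <;> fin_cases y <;>
    simp only [fin7mk0, fin7mk1, fin7mk2, fin7mk3, fin7mk4, fin7mk5, fin7mk6,
      fin3mk0, fin3mk1, fin3mk2, vec3at0, vec3at1, vec3at2, vec4at0, vec4at1, vec4at2, vec4at3, vec7at0, vec7at1, vec7at2, vec7at3, vec7at4, vec7at5, vec7at6,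
      Matrix.of_apply, Th, Fm0, Fm1, Fm2, Fm3, Fm4, Fm5, Fm6,
      trace_smul_l, trace_vmv, trace_EEnt5, pE] <;>
    norm_num [es, ws, dotProduct, Fin.sum_univ_succ, Matrix.vecHead, Matrix.vecTail, Matrix.cons_val_zero, Matrix.cons_val_one, Matrix.cons_val_two, Matrix.cons_val_three, vec3at0, vec3at1, vec3at2, vec4at0, vec4at1, vec4at2, vec4at3, vec7at0, vec7at1, vec7at2, vec7at3, vec7at4, vec7at5, vec7at6]

def Acert : Fin 7 → Fin 7 → ℕ :=
  ![![0,2,0,1,0,0,0], ![0,0,0,1,0,2,0], ![2,0,0,0,0,0,2], ![0,0,2,0,0,0,2],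
    ![0,0,0,1,2,0,0], ![2,0,2,1,0,0,0], ![0,0,0,0,0,0,0]]

theorem Acert_cut : ∀ S : Finset (Fin 7), S.card ≤ 4 →
    ∑ x, S.sup (fun y => Acert x y) ≤ 10 := by decide

lemma Fm_sum : ∑ y, Fm y = Ebar := by
  rw [Fin.sum_univ_seven, Fm0, Fm1, Fm2, Fm3, Fm4, Fm5, Fm6]
  ext a b
  fin_cases a <;> fin_cases b <;>
    norm_num [Ebar, es, EEnt, Matrix.vecMulVec_apply, Matrix.smul_apply, Matrix.add_apply,
      Matrix.of_apply, vec3at0, vec3at1, vec3at2, vec4at0, vec4at1, vec4at2, vec4at3,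
      vec8at5]

lemma Lsum_pE : ∑ x, ∑ y, (Acert x y : ℝ) * pE x y = 21/2 := by
  simp only [Fin.sum_univ_seven, Acert, pE, Matrix.of_apply,
    vec7at0, vec7at1, vec7at2, vec7at3, vec7at4, vec7at5, vec7at6]
  norm_num

lemma lin_f : IsLinearMap ℝ (fun q : Matrix (Fin 7) (Fin 7) ℝ =>
    ∑ x, ∑ y, (Acert x y : ℝ) * q x y) := by
  constructor
  · intro p q
    simp [Matrix.add_apply, mul_add, Finset.sum_add_distrib]
  · intro c q
    simp only [Matrix.smul_apply, smul_eq_mul, Finset.mul_sum]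
    congr 1; ext x; congr 1; ext y; ring

lemma V_bound : V 7 7 4 ⊆ {q : Matrix (Fin 7) (Fin 7) ℝ |
    ∑ x, ∑ y, (Acert x y : ℝ) * q x y ≤ 10} := by
  classical
  rintro v ⟨h01, hrow, hcard⟩
  have hvnn : ∀ x y, (0:ℝ) ≤ v x y := by
    intro x y; rcases h01 x y with h | h <;> rw [h] <;> norm_num
  set T : Finset (Fin 7) := {y : Fin 7 | ∃ x, v x y ≠ 0}.toFinset with hTdef
  have hTcard : T.card ≤ 4 := by
    rwa [Set.ncard_eq_toFinset_card'] at hcard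
  have hv0 : ∀ x y, y ∉ T → v x y = 0 := by
    intro x y hy
    by_contra h
    exact hy (by rw [hTdef, Set.mem_toFinset]; exact ⟨x, h⟩)
  have key : ∀ x : Fin 7, ∑ y, (Acert x y : ℝ) * v x y ≤ ((T.sup (fun y => Acert x y) : ℕ) : ℝ) := by
    intro x
    have h1 : ∑ y, (Acert x y : ℝ) * v x y = ∑ y ∈ T, (Acert x y : ℝ) * v x y := by
      refine (Finset.sum_subset (Finset.subset_univ T) ?_).symm
      intro y _ hy; rw [hv0 x y hy, mul_zero]
    rw [h1]
    calc ∑ y ∈ T, (Acert x y : ℝ) * v x y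
        ≤ ∑ y ∈ T, ((T.sup (fun y => Acert x y) : ℕ) : ℝ) * v x y := by
          refine Finset.sum_le_sum fun y hy => ?_
          exact mul_le_mul_of_nonneg_right (Nat.cast_le.2 (Finset.le_sup hy)) (hvnn x y)
      _ = ((T.sup (fun y => Acert x y) : ℕ) : ℝ) * ∑ y ∈ T, v x y := by rw [Finset.mul_sum]
      _ ≤ ((T.sup (fun y => Acert x y) : ℕ) : ℝ) * 1 := by
          refine mul_le_mul_of_nonneg_left ?_ (Nat.cast_nonneg _)
          calc ∑ y ∈ T, v x y
              ≤ ∑ y, v x y := Finset.sum_le_sum_of_subset_of_nonneg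
                (Finset.subset_univ T) (fun y _ _ => hvnn x y)
            _ = 1 := hrow x
      _ = _ := mul_one _
  calc ∑ x, ∑ y, (Acert x y : ℝ) * v x y
      ≤ ∑ x, ((T.sup (fun y => Acert x y) : ℕ) : ℝ) := Finset.sum_le_sum fun x _ => key x
    _ = ((∑ x, T.sup (fun y => Acert x y) : ℕ) : ℝ) := by rw [Nat.cast_sum]
    _ ≤ 10 := by exact_mod_cast Nat.cast_le.2 (Acert_cut T hTcard)

theorem final :
    (Matrix.of fun x y => Matrix.trace ((Fm y)ᵀ * Th x)) ∉ C 7 7 4 := by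
  rw [hp]
  intro hmem
  have h := convexHull_min V_bound (convex_halfSpace_le lin_f 10) hmem
  rw [Set.mem_setOf_eq, Lsum_pE] at h
  norm_num at h

/-- The bipartite HS Model violates the no-hypersignaling principle: there is a
correlation obtainable from factorized states and a measurement of the bipartite
HS system which is not obtainable from two classical bits. -/
theorem HS_model_hypersignaling :
    ∃ (Θ : Fin 7 → Matrix (Fin 3) (Fin 3) ℝ) (F : Fin 7 → Matrix (Fin 3) (Fin 3) ℝ),
      (∀ x, ∃ i j : Fin 4, Θ x = Matrix.vecMulVec (ws i) (ws j)) ∧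
      (∀ y, ∃ c : Fin 24 → ℝ, (∀ k, 0 ≤ c k) ∧ F y = ∑ k, c k • Effs k) ∧
      (∑ y, F y = Ebar) ∧
      (Matrix.of fun x y => Matrix.trace ((F y)ᵀ * Θ x)) ∉ C 7 7 4 := by
  refine ⟨Th, Fm, ?_, ?_, Fm_sum, final⟩
  · intro x
    fin_cases x
    exacts [⟨2,1,rfl⟩, ⟨3,2,rfl⟩, ⟨1,2,rfl⟩, ⟨2,3,rfl⟩, ⟨3,1,rfl⟩, ⟨1,3,rfl⟩, ⟨0,2,rfl⟩]
  · intro y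
    exact ⟨cmeas y, fun k => by unfold cmeas; positivity, rfl⟩
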